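/- If 1 < p < 2 and M > 0, there is a constant c = c(k,p,M) such that for all z, η ∈ ℝ^k with |η| ≤ M: |V_p(z - η)| ≤ c |V_p(z) - V_p(η)|. -/

import Mathlib

open Real

noncomputable def V (p : ℝ) {k : ℕ} (z : EuclideanSpace ℝ (Fin k)) :
    EuclideanSpace ℝ (Fin k) :=
  ((1 + ‖z‖ ^ 2) ^ ((p - 2) / 4)) • z

lemma aux_deriv (p t : ℝ) :
    HasDerivAt (fun t : ℝ => t * (1 + t ^ 2) ^ ((p - 2) / 4))
      ((1 + t ^ 2) ^ ((p - 2) / 4)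
        + t * ((2 * t) * ((p - 2) / 4) * (1 + t ^ 2) ^ ((p - 2) / 4 - 1))) t := by
  have hpos : (0:ℝ) < 1 + t ^ 2 := by positivity
  have h1 : HasDerivAt (fun t : ℝ => 1 + t ^ 2) (2 * t) t := by
    simpa using (hasDerivAt_pow 2 t).const_add 1
  have h2 := h1.rpow_const (p := (p - 2) / 4) (Or.inl hpos.ne')
  have h3 := (hasDerivAt_id' t).mul h2
  simp only [one_mul] at h3
  exact h3

lemma aux_mvt (p : ℝ) (hp1 : 1 < p) (hp2 : p < 2) {a b : ℝ} (hb : 0 ≤ b) (hab : b ≤ a) :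
    p / 2 * (1 + a ^ 2 + b ^ 2) ^ ((p - 2) / 4) * (a - b)
      ≤ a * (1 + a ^ 2) ^ ((p - 2) / 4) - b * (1 + b ^ 2) ^ ((p - 2) / 4) := by
  set e : ℝ := (p - 2) / 4 with he
  have key := Convex.mul_sub_le_image_sub_of_le_deriv (convex_Icc b a)
    (f := fun t : ℝ => t * (1 + t ^ 2) ^ e)
    (C := p / 2 * (1 + a ^ 2 + b ^ 2) ^ e)
    (fun t _ => (aux_deriv p t).continuousAt.continuousWithinAt)
    (fun t _ => (aux_deriv p t).differentiableAt.differentiableWithinAt)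
    ?_ b (by simp [hab]) a (by simp [hab]) hab
  · simpa using key
  · intro t ht
    rw [interior_Icc] at ht
    have ht0 : 0 ≤ t := le_trans hb ht.1.le
    have hpos : (0:ℝ) < 1 + t ^ 2 := by positivity
    rw [(aux_deriv p t).deriv]
    have hB : (0:ℝ) < (1 + t ^ 2) ^ (e - 1) := rpow_pos_of_pos hpos _
    have hmul : (1 + t ^ 2) ^ (e - 1) * (1 + t ^ 2) = (1 + t ^ 2) ^ e := by
      rw [← Real.rpow_add_one hpos.ne' (e - 1)]; ring_nf
    have hA : p / 2 * (1 + t ^ 2) ^ e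
        ≤ (1 + t ^ 2) ^ e + t * ((2 * t) * e * (1 + t ^ 2) ^ (e - 1)) := by
      nlinarith [hB, sq_nonneg t, mul_pos hB hpos]
    refine le_trans ?_ hA
    have hle : (1 + a ^ 2 + b ^ 2) ^ e ≤ (1 + t ^ 2) ^ e := by
      apply Real.rpow_le_rpow_of_nonpos hpos
      · nlinarith [ht.2, sq_nonneg b]
      · rw [he]; linarith
    nlinarith [hle]

lemma scalar_core (p : ℝ) (hp1 : 1 < p) (hp2 : p < 2) (a b s Gz Gη h : ℝ)
    (ha0 : 0 ≤ a) (hb0 : 0 ≤ b) (hhpos : 0 < h)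
    (hGzh : h ≤ Gz) (hGηh : h ≤ Gη)
    (hs1 : s ≤ a * b) (hs2 : -(a * b) ≤ s)
    (E1 : p / 2 * h * (a - b) ^ 2 ≤ Gz * a ^ 2 + Gη * b ^ 2 - (Gz + Gη) * (a * b)) :
    p / 2 * h * (a ^ 2 + b ^ 2 - 2 * s) ≤ Gz * a ^ 2 + Gη * b ^ 2 - (Gz + Gη) * s := by
  have E2 : p / 2 * h * (a + b) ^ 2 ≤ Gz * a ^ 2 + Gη * b ^ 2 + (Gz + Gη) * (a * b) := by
    nlinarith [mul_le_mul_of_nonneg_right hGzh (sq_nonneg a),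
      mul_le_mul_of_nonneg_right hGηh (sq_nonneg b),
      mul_le_mul_of_nonneg_right hGzh (mul_nonneg ha0 hb0),
      mul_le_mul_of_nonneg_right hGηh (mul_nonneg ha0 hb0),
      mul_nonneg (mul_nonneg (by linarith : (0:ℝ) ≤ 2 - p) hhpos.le) (sq_nonneg (a + b))]
  rcases le_total (p * h) (Gz + Gη) with hc | hc
  · nlinarith [mul_le_mul_of_nonneg_left hs1 (sub_nonneg.mpr hc)]
  · nlinarith [mul_le_mul_of_nonneg_left hs2 (sub_nonneg.mpr hc)]

lemma key_inner (p : ℝ) (hp1 : 1 < p) (hp2 : p < 2) {k : ℕ}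
    (z η : EuclideanSpace ℝ (Fin k)) :
    p / 2 * (1 + ‖z‖ ^ 2 + ‖η‖ ^ 2) ^ ((p - 2) / 4) * ‖z - η‖ ^ 2
      ≤ inner ℝ (V p z - V p η) (z - η) := by
  have he2 : (p - 2) / 4 ≤ 0 := by linarith
  have ha0 : (0:ℝ) ≤ ‖z‖ := norm_nonneg z
  have hb0 : (0:ℝ) ≤ ‖η‖ := norm_nonneg η
  have hhpos : (0:ℝ) < (1 + ‖z‖ ^ 2 + ‖η‖ ^ 2) ^ ((p - 2) / 4) :=
    rpow_pos_of_pos (by positivity) _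
  have hGzh : (1 + ‖z‖ ^ 2 + ‖η‖ ^ 2) ^ ((p - 2) / 4) ≤ (1 + ‖z‖ ^ 2) ^ ((p - 2) / 4) :=
    Real.rpow_le_rpow_of_nonpos (by positivity) (by nlinarith) he2
  have hGηh : (1 + ‖z‖ ^ 2 + ‖η‖ ^ 2) ^ ((p - 2) / 4) ≤ (1 + ‖η‖ ^ 2) ^ ((p - 2) / 4) :=
    Real.rpow_le_rpow_of_nonpos (by positivity) (by nlinarith) he2
  have hinner : (inner ℝ (V p z - V p η) (z - η) : ℝ)
      = (1 + ‖z‖ ^ 2) ^ ((p - 2) / 4) * ‖z‖ ^ 2 + (1 + ‖η‖ ^ 2) ^ ((p - 2) / 4) * ‖η‖ ^ 2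
        - ((1 + ‖z‖ ^ 2) ^ ((p - 2) / 4) + (1 + ‖η‖ ^ 2) ^ ((p - 2) / 4)) * inner ℝ z η := by
    simp only [V, inner_sub_left, inner_sub_right, real_inner_smul_left,
      real_inner_self_eq_norm_sq]
    linear_combination ((1 + ‖η‖ ^ 2 : ℝ) ^ ((p - 2) / 4)) * (real_inner_comm η z)
  have hnorm : ‖z - η‖ ^ 2 = ‖z‖ ^ 2 + ‖η‖ ^ 2 - 2 * inner ℝ z η := by
    rw [norm_sub_sq_real]; ring
  have hsab : |(inner ℝ z η : ℝ)| ≤ ‖z‖ * ‖η‖ := abs_real_inner_le_norm z η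
  have E1 : p / 2 * (1 + ‖z‖ ^ 2 + ‖η‖ ^ 2) ^ ((p - 2) / 4) * (‖z‖ - ‖η‖) ^ 2
      ≤ (1 + ‖z‖ ^ 2) ^ ((p - 2) / 4) * ‖z‖ ^ 2 + (1 + ‖η‖ ^ 2) ^ ((p - 2) / 4) * ‖η‖ ^ 2
        - ((1 + ‖z‖ ^ 2) ^ ((p - 2) / 4) + (1 + ‖η‖ ^ 2) ^ ((p - 2) / 4)) * (‖z‖ * ‖η‖) := by
    rcases le_total ‖η‖ ‖z‖ with hab | hab
    · have h2 := aux_mvt p hp1 hp2 hb0 hab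
      nlinarith [sub_nonneg.mpr hab]
    · have h2 := aux_mvt p hp1 hp2 ha0 hab
      rw [show (1 + ‖η‖ ^ 2 + ‖z‖ ^ 2 : ℝ) = 1 + ‖z‖ ^ 2 + ‖η‖ ^ 2 by ring] at h2
      nlinarith [sub_nonneg.mpr hab]
  rw [hinner, hnorm]
  exact scalar_core p hp1 hp2 _ _ _ _ _ _ ha0 hb0 hhpos hGzh hGηh
    (le_trans (le_abs_self _) hsab) (neg_le_of_abs_le hsab) E1

theorem stmt_8 {k : ℕ} (p : ℝ) (hp1 : 1 < p) (hp2 : p < 2) (M : ℝ) (hM : 0 < M) :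
    ∃ c : ℝ, 0 < c ∧ ∀ z η : EuclideanSpace ℝ (Fin k), ‖η‖ ≤ M →
      ‖V p (z - η)‖ ≤ c * ‖V p z - V p η‖ := by
  have hp0 : 0 < p := by linarith
  refine ⟨2 / p * (2 + 3 * M ^ 2) ^ ((2 - p) / 4), by positivity, ?_⟩
  intro z η hη
  set e : ℝ := (p - 2) / 4 with he
  set d := ‖z - η‖ with hd
  have hd0 : 0 ≤ d := norm_nonneg _
  set a := ‖z‖
  set b := ‖η‖
  have ha0 : 0 ≤ a := norm_nonneg z
  have hb0 : 0 ≤ b := norm_nonneg η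
  set h : ℝ := (1 + a ^ 2 + b ^ 2) ^ e with hh
  have hhpos : 0 < h := rpow_pos_of_pos (by positivity) _
  -- norm of V (z - η)
  have hVnorm : ‖V p (z - η)‖ = (1 + d ^ 2) ^ e * d := by
    rw [V, norm_smul, Real.norm_eq_abs, abs_of_pos (rpow_pos_of_pos (by positivity) _)]
  -- bound (1+d^2)^e ≤ (2+3M^2)^(-e) * h
  have hKey : (1 + d ^ 2 : ℝ) ^ e ≤ (2 + 3 * M ^ 2) ^ ((2 - p) / 4) * h := by
    have htri : a ≤ d + b := by
      rw [hd]
      calc a = ‖(z - η) + η‖ := by rw [sub_add_cancel]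
        _ ≤ ‖z - η‖ + ‖η‖ := norm_add_le _ _
    have hcomp : (1 + a ^ 2 + b ^ 2 : ℝ) ≤ (2 + 3 * M ^ 2) * (1 + d ^ 2) := by
      nlinarith [sq_nonneg (d - b), sq_nonneg d, hη, hb0, hM, mul_le_mul htri htri ha0 (by linarith)]
    have h1 : ((2 + 3 * M ^ 2) * (1 + d ^ 2)) ^ e ≤ h := by
      rw [hh]
      exact Real.rpow_le_rpow_of_nonpos (by positivity) hcomp (by rw [he]; linarith)
    rw [Real.mul_rpow (by positivity) (by positivity)] at h1
    have hKpos : (0:ℝ) < (2 + 3 * M ^ 2) ^ e := rpow_pos_of_pos (by positivity) _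
    have hinv : (2 + 3 * M ^ 2 : ℝ) ^ ((2 - p) / 4) * (2 + 3 * M ^ 2) ^ e = 1 := by
      rw [← Real.rpow_add (by positivity)]
      norm_num [he]
      rw [show (2 - p) / 4 + (p - 2) / 4 = 0 by ring, Real.rpow_zero]
    calc (1 + d ^ 2 : ℝ) ^ e
        = (2 + 3 * M ^ 2) ^ ((2 - p) / 4) * ((2 + 3 * M ^ 2) ^ e * (1 + d ^ 2) ^ e) := by
          rw [← mul_assoc, hinv, one_mul]
      _ ≤ (2 + 3 * M ^ 2) ^ ((2 - p) / 4) * h := by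
          apply mul_le_mul_of_nonneg_left h1 (by positivity)
  rcases eq_or_lt_of_le hd0 with hd0' | hdpos
  · -- z = η
    have : z - η = 0 := norm_eq_zero.mp (by rw [← hd]; exact hd0'.symm)
    rw [hVnorm, ← hd0']
    simp
    positivity
  · -- main case
    have hlow : p / 2 * h * d ≤ ‖V p z - V p η‖ := by
      have h1 := key_inner p hp1 hp2 z η
      have h2 : (inner ℝ (V p z - V p η) (z - η) : ℝ) ≤ ‖V p z - V p η‖ * d :=
        real_inner_le_norm _ _
      have h3 : p / 2 * h * d ^ 2 ≤ ‖V p z - V p η‖ * d := by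
        calc p / 2 * h * d ^ 2 ≤ inner ℝ (V p z - V p η) (z - η) := h1
          _ ≤ _ := h2
      nlinarith [hdpos]
    rw [hVnorm]
    calc (1 + d ^ 2) ^ e * d ≤ ((2 + 3 * M ^ 2) ^ ((2 - p) / 4) * h) * d :=
          mul_le_mul_of_nonneg_right hKey hd0
      _ = 2 / p * (2 + 3 * M ^ 2) ^ ((2 - p) / 4) * (p / 2 * h * d) := by
          field_simp
      _ ≤ _ := by
          apply mul_le_mul_of_nonneg_left hlow (by positivity)
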